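/- arXiv:2511.17365 — 3 statements merged into one kernel-verified Lean document; each statement's English description precedes it below -/
import Mathlib

section
/- Let A, B, T be abelian groups, let c : A × B → T be a function, and let P₀ ∈ A satisfy 2·P₀ = 0. Assume c(P, Q) = c(P + P₀, −Q) for all P ∈ A, Q ∈ B. Define z(P, Q) = c(P, Q) − c(P, 0) − c(0, Q) + c(0, 0), and assume z is biadditive (additive in each variable separately). Then for all P ∈ A and Q ∈ B one has 2·z(P, Q) = (c(P₀, Q) − c(0, Q)) + z(P₀, −Q). -/
/-- the identity combining equations (1) and (2) in the proof of the
main theorem for bielliptic surfaces of Type 1.  With `c` invariant under the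
Type 1 action, `P₀` a 2-torsion element, and
`z (P, Q) = c (P, Q) - c (P, 0) - c (0, Q) + c (0, 0)` biadditive, one has
`2 • z (P, Q) = (c (P₀, Q) - c (0, Q)) + z (P₀, -Q)`. -/
theorem stmt_2 {A B T : Type*} [AddCommGroup A] [AddCommGroup B] [AddCommGroup T]
    (c : A × B → T) (P₀ : A) (hP₀ : 2 • P₀ = 0)
    (hinv : ∀ P : A, ∀ Q : B, c (P, Q) = c (P + P₀, -Q))
    (z : A × B → T)
    (hz : ∀ P : A, ∀ Q : B, z (P, Q) = c (P, Q) - c (P, 0) - c (0, Q) + c (0, 0))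
    (hleft : ∀ P P' : A, ∀ Q : B, z (P + P', Q) = z (P, Q) + z (P', Q))
    (hright : ∀ P : A, ∀ Q Q' : B, z (P, Q + Q') = z (P, Q) + z (P, Q')) :
    ∀ P : A, ∀ Q : B,
      2 • z (P, Q) = (c (P₀, Q) - c (0, Q)) + z (P₀, -Q) := by
  intro P Q
  -- z vanishes on the second coordinate being 0
  have hz0 : ∀ P : A, z (P, 0) = 0 := by
    intro P
    have h := hright P 0 0
    simp only [add_zero] at h
    exact right_eq_add.mp h
  -- invariance at the origin: c(P₀,0) = c(0,0)
  have hc00 : c (P₀, 0) = c (0, 0) := by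
    have h := hinv 0 0
    simp only [zero_add, neg_zero] at h
    exact h.symm
  -- z(P,Q) = z(P+P₀,-Q) - z(P₀,-Q), hence z(P,Q) = z(P,-Q)
  have hzinv : ∀ P : A, ∀ Q : B, z (P, Q) = z (P, -Q) := by
    intro P Q
    have h1 : z (P, Q) = z (P + P₀, -Q) - z (P₀, -Q) := by
      rw [hz P Q, hz (P + P₀) (-Q), hz P₀ (-Q),
        hinv P Q, hinv P 0, hinv 0 Q, hinv 0 0]
      simp only [zero_add, neg_zero]
      abel
    rw [h1, hleft]
    abel
  -- z(P,Q) + z(P,-Q) = z(P,0) = 0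
  have hsum : ∀ P : A, ∀ Q : B, z (P, Q) + z (P, -Q) = 0 := by
    intro P Q
    have h := hright P Q (-Q)
    rw [add_neg_cancel, hz0] at h
    exact h.symm
  -- LHS is 0
  have hL : 2 • z (P, Q) = 0 := by
    rw [two_smul]
    nth_rewrite 2 [hzinv P Q]
    exact hsum P Q
  -- RHS is z(P₀,Q) + z(P₀,-Q) = 0
  have hR : c (P₀, Q) - c (0, Q) = z (P₀, Q) := by
    rw [hz P₀ Q, hc00]
    abel
  rw [hL, hR, hsum P₀ Q]
end

section
/- Let k be a field, let E₁ and E₂ be elliptic curves over k (smooth Weierstrass curves, whose k-rational points form abelian groups), and let P₀ ∈ E₁(k) satisfy 2·P₀ = 0. Let T be an abelian group and c : E₁(k) × E₂(k) → T a function such that: (i) c(P, Q) = c(P + P₀, −Q) for all P ∈ E₁(k), Q ∈ E₂(k); (ii) the function z(P, Q) := c(P, Q) − c(P, 0) − c(0, Q) + c(0, 0) is biadditive (additive in each variable separately); and (iii) 2·(c(P₀, Q) − c(0, Q)) = 0 for all Q ∈ E₂(k). Then 4·z(P, Q) = 0 for all P ∈ E₁(k) and Q ∈ E₂(k). -/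
open Classical in
/-- the core of the proof of the main theorem for bielliptic surfaces of
Type 1.  Let `E₁`, `E₂` be elliptic curves over a field `k` (smooth Weierstrass curves,
whose `k`-rational points form abelian groups), let `P₀ ∈ E₁(k)` be 2-torsion, and let
`c : E₁(k) × E₂(k) → T` satisfy (i) `c (P, Q) = c (P + P₀, -Q)`, (ii) the associated
`z (P, Q) = c (P, Q) - c (P, 0) - c (0, Q) + c (0, 0)` is biadditive, and
(iii) `2 • (c (P₀, Q) - c (0, Q)) = 0` for all `Q`.  Then `4 • z (P, Q) = 0`. -/
theorem stmt_3 {k : Type*} [Field k]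
    (E₁ E₂ : WeierstrassCurve k) [E₁.IsElliptic] [E₂.IsElliptic]
    (P₀ : E₁.toAffine.Point) (hP₀ : 2 • P₀ = 0)
    {T : Type*} [AddCommGroup T]
    (c : E₁.toAffine.Point × E₂.toAffine.Point → T)
    (hinv : ∀ (P : E₁.toAffine.Point) (Q : E₂.toAffine.Point),
      c (P, Q) = c (P + P₀, -Q))
    (z : E₁.toAffine.Point × E₂.toAffine.Point → T)
    (hz : ∀ (P : E₁.toAffine.Point) (Q : E₂.toAffine.Point),
      z (P, Q) = c (P, Q) - c (P, 0) - c (0, Q) + c (0, 0))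
    (hleft : ∀ (P P' : E₁.toAffine.Point) (Q : E₂.toAffine.Point),
      z (P + P', Q) = z (P, Q) + z (P', Q))
    (hright : ∀ (P : E₁.toAffine.Point) (Q Q' : E₂.toAffine.Point),
      z (P, Q + Q') = z (P, Q) + z (P, Q'))
    (htor : ∀ Q : E₂.toAffine.Point, 2 • (c (P₀, Q) - c (0, Q)) = 0) :
    ∀ (P : E₁.toAffine.Point) (Q : E₂.toAffine.Point), 4 • z (P, Q) = 0 := by
  intro P Q
  -- z(P,0) = 0
  have hzero : z (P, 0) = 0 := by
    have h := hright P 0 0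
    rw [add_zero] at h
    exact left_eq_add.mp h
  -- z(P,-Q) = -z(P,Q)
  have hneg : z (P, -Q) = - z (P, Q) := by
    have h := hright P Q (-Q)
    rw [add_neg_cancel, hzero] at h
    exact eq_neg_of_add_eq_zero_right h.symm
  have e1 : c (P, -Q) = c (P + P₀, Q) := by simpa using hinv P (-Q)
  have e2 : c (P, 0) = c (P + P₀, 0) := by simpa using hinv P 0
  have e3 : c (0, -Q) = c (P₀, Q) := by simpa using hinv 0 (-Q)
  have e4 : c (0, (0 : E₂.toAffine.Point)) = c (P₀, 0) := by simpa using hinv 0 0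
  have key : - z (P, Q) = z (P, Q) := by
    calc - z (P, Q) = z (P, -Q) := hneg.symm
      _ = c (P + P₀, Q) - c (P + P₀, 0) - c (P₀, Q) + c (P₀, 0) := by
          rw [hz, e1, e2, e3, e4]
      _ = z (P + P₀, Q) + (c (0, Q) - c (0, 0)) - c (P₀, Q) + c (P₀, 0) := by
          rw [hz]; abel
      _ = z (P, Q) + z (P₀, Q) + (c (0, Q) - c (0, 0)) - c (P₀, Q) + c (P₀, 0) := by
          rw [hleft]
      _ = z (P, Q) := by rw [hz P₀ Q]; abel
  have h2 : 2 • z (P, Q) = 0 := by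
    rw [two_smul]
    nth_rewrite 1 [← key]
    exact neg_add_cancel _
  rw [show (4 : ℕ) = 2 * 2 from rfl, mul_smul, h2, smul_zero]
end

section
/- Let k be a field, let E₁ and E₂ be elliptic curves over k (smooth Weierstrass curves, whose k-rational points form abelian groups), let P₀ ∈ E₁(k) satisfy 3·P₀ = 0, and let ω : E₂(k) → E₂(k) be an additive endomorphism satisfying ω(ω(Q)) + ω(Q) + Q = 0 for all Q ∈ E₂(k). Let T be an abelian group and c : E₁(k) × E₂(k) → T a function such that: (i) c(P, Q) = c(P + P₀, ω(Q)) for all P, Q; (ii) the function z(P, Q) := c(P, Q) − c(P, 0) − c(0, Q) + c(0, 0) is biadditive (additive in each variable separately); and (iii) 3·(c(P₀, Q) − c(0, Q)) = 0 for all Q ∈ E₂(k). Then 9·z(P, Q) = 0 for all P ∈ E₁(k) and Q ∈ E₂(k). -/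
open Classical in
/-- the core of the proof of the main theorem for bielliptic surfaces of
Type 5.  Let `E₁`, `E₂` be elliptic curves over a field `k`, let `P₀ ∈ E₁(k)` be
3-torsion, and let `ω` be an additive endomorphism of `E₂(k)` with
`ω (ω Q) + ω Q + Q = 0`.  Suppose `c : E₁(k) × E₂(k) → T` satisfies
(i) `c (P, Q) = c (P + P₀, ω Q)`, (ii) the associated
`z (P, Q) = c (P, Q) - c (P, 0) - c (0, Q) + c (0, 0)` is biadditive, and
(iii) `3 • (c (P₀, Q) - c (0, Q)) = 0` for all `Q`.  Then `9 • z (P, Q) = 0`. -/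
theorem stmt_6 {k : Type*} [Field k]
    (E₁ E₂ : WeierstrassCurve k) [E₁.IsElliptic] [E₂.IsElliptic]
    (P₀ : E₁.toAffine.Point) (hP₀ : 3 • P₀ = 0)
    (ω : E₂.toAffine.Point →+ E₂.toAffine.Point)
    (hω : ∀ Q : E₂.toAffine.Point, ω (ω Q) + ω Q + Q = 0)
    {T : Type*} [AddCommGroup T]
    (c : E₁.toAffine.Point × E₂.toAffine.Point → T)
    (hinv : ∀ (P : E₁.toAffine.Point) (Q : E₂.toAffine.Point),
      c (P, Q) = c (P + P₀, ω Q))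
    (z : E₁.toAffine.Point × E₂.toAffine.Point → T)
    (hz : ∀ (P : E₁.toAffine.Point) (Q : E₂.toAffine.Point),
      z (P, Q) = c (P, Q) - c (P, 0) - c (0, Q) + c (0, 0))
    (hleft : ∀ (P P' : E₁.toAffine.Point) (Q : E₂.toAffine.Point),
      z (P + P', Q) = z (P, Q) + z (P', Q))
    (hright : ∀ (P : E₁.toAffine.Point) (Q Q' : E₂.toAffine.Point),
      z (P, Q + Q') = z (P, Q) + z (P, Q'))
    (htor : ∀ Q : E₂.toAffine.Point, 3 • (c (P₀, Q) - c (0, Q)) = 0) :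
    ∀ (P : E₁.toAffine.Point) (Q : E₂.toAffine.Point), 9 • z (P, Q) = 0 := by
    -- 3 • z (P₀, Q) = 0
  have h3 : ∀ Q : E₂.toAffine.Point, 3 • z (P₀, Q) = 0 := by
    intro Q
    have h1 := htor Q
    have h2 := htor 0
    rw [hz]
    have e : c (P₀, Q) - c (P₀, 0) - c (0, Q) + c (0, 0)
        = (c (P₀, Q) - c (0, Q)) - (c (P₀, 0) - c (0, 0)) := by abel
    rw [e, smul_sub, h1, h2, sub_zero]
  -- c (-P₀, 0) = c (0, 0)
  have hc0 : c (-P₀, 0) = c (0, 0) := by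
    have h := hinv (-P₀) 0
    rw [neg_add_cancel, map_zero] at h
    exact h
  -- z (P + P₀, ω Q) = z (P, Q) - z (-P₀, Q)
  have hkey : ∀ (P : E₁.toAffine.Point) (Q : E₂.toAffine.Point),
      z (P + P₀, ω Q) = z (P, Q) - z (-P₀, Q) := by
    intro P Q
    have e1 : c (P + P₀, ω Q) = c (P, Q) := (hinv P Q).symm
    have e2 : c (P + P₀, 0) = c (P, 0) := by
      have h := hinv P 0
      rw [map_zero] at h
      exact h.symm
    have e3 : c (0, ω Q) = c (-P₀, Q) := by
      have h := hinv (-P₀) Q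
      rw [neg_add_cancel] at h
      exact h.symm
    rw [hz, hz, hz, e1, e2, e3, hc0]
    abel
  -- 3 • z (-P₀, Q) = 0
  have h3n : ∀ Q : E₂.toAffine.Point, 3 • z (-P₀, Q) = 0 := by
    intro Q
    have h := hleft P₀ (-P₀) Q
    rw [add_neg_cancel] at h
    have hz00 : z (0, Q) = 0 := by
      have h0 := hleft 0 0 Q
      rw [add_zero] at h0
      have : z (0, Q) + 0 = z (0, Q) + z (0, Q) := by rw [add_zero]; exact h0
      exact (add_left_cancel this).symm
    rw [hz00] at h
    have : 3 • (z (P₀, Q) + z (-P₀, Q)) = 0 := by rw [← h, smul_zero]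
    rw [smul_add, h3 Q, zero_add] at this
    exact this
  -- 3 • z (P, ω Q) = 3 • z (P, Q)
  have key3 : ∀ (P : E₁.toAffine.Point) (Q : E₂.toAffine.Point),
      3 • z (P, ω Q) = 3 • z (P, Q) := by
    intro P Q
    have h := hleft P P₀ (ω Q)
    rw [hkey P Q] at h
    have : 3 • (z (P, Q) - z (-P₀, Q)) = 3 • (z (P, ω Q) + z (P₀, ω Q)) := by rw [h]
    rw [smul_sub, smul_add, h3n Q, h3 (ω Q), sub_zero, add_zero] at this
    exact this.symm
  intro P Q
  -- z (P, ω (ω Q)) + z (P, ω Q) + z (P, Q) = 0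
  have hsum : z (P, ω (ω Q)) + z (P, ω Q) + z (P, Q) = 0 := by
    have h1 := hright P (ω (ω Q) + ω Q) Q
    have h2 := hright P (ω (ω Q)) (ω Q)
    rw [hω Q, h2] at h1
    have hzP0 : z (P, 0) = 0 := by rw [hz]; abel
    rw [hzP0] at h1
    exact h1.symm
  have h9 : 3 • (z (P, ω (ω Q)) + z (P, ω Q) + z (P, Q)) = 0 := by
    rw [hsum, smul_zero]
  rw [smul_add, smul_add, key3 P (ω Q), key3 P Q] at h9
  calc 9 • z (P, Q) = 3 • z (P, Q) + 3 • z (P, Q) + 3 • z (P, Q) := by abel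
    _ = 0 := h9
end
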